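/- Let t ≥ 1 and 2 ≤ ω ≤ t be integers, and let G be a finite simple graph of treewidth at most t whose largest clique has at most ω vertices. Then the fractional chromatic number of G satisfies χ_f(G) ≤ t + (ω − 1)/t. -/

import Mathlib

open MeasureTheory ENNReal

/-- `H` (a graph on vertex set `Fin n`) is a `t`-tree, witnessed by the natural ordering of
`Fin n`: the first `t` vertices form a clique, and every later vertex has a backward
neighborhood that is a clique on exactly `t` vertices. -/
def IsTTree (t n : ℕ) (H : SimpleGraph (Fin n)) : Prop :=
  t ≤ n ∧
  (∀ i j : Fin n, (i : ℕ) < t → (j : ℕ) < t → i ≠ j → H.Adj i j) ∧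
  ∀ i : Fin n, t ≤ (i : ℕ) →
    H.IsClique {j : Fin n | j < i ∧ H.Adj i j} ∧ {j : Fin n | j < i ∧ H.Adj i j}.ncard = t

/-- `G` has treewidth at most `t`, i.e. `G` is a partial `t`-tree: a subgraph of some `t`-tree. -/
def TreewidthAtMost {V : Type} (G : SimpleGraph V) (t : ℕ) : Prop :=
  ∃ (n : ℕ) (H : SimpleGraph (Fin n)) (f : V → Fin n),
    IsTTree t n H ∧ Function.Injective f ∧ ∀ u v : V, G.Adj u v → H.Adj (f u) (f v)

/-- A fractional coloring of `G`: each vertex gets a measurable subset of `ℝ` of Lebesgue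
measure `1`, with adjacent vertices receiving disjoint sets. -/
def IsFracColoring {V : Type} (G : SimpleGraph V) (φ : V → Set ℝ) : Prop :=
  (∀ v, MeasurableSet (φ v)) ∧ (∀ v, volume (φ v) = 1) ∧
  ∀ u v : V, G.Adj u v → φ u ∩ φ v = ∅

/-- The fractional chromatic number of `G`: the infimum over all fractional colorings of the
Lebesgue measure of the union of all color sets. -/
noncomputable def fracChromNum {V : Type} (G : SimpleGraph V) : ℝ≥0∞ :=
  ⨅ (φ : V → Set ℝ) (_ : IsFracColoring G φ), volume (⋃ v : V, φ v)

private lemma exists_subset_volume_eq {A : Set ℝ} {B : ℝ} (hA : MeasurableSet A)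
    (hB : 0 ≤ B) (hsub : A ⊆ Set.Ico 0 B) {r : ℝ≥0∞} (hr : r ≤ volume A) :
    ∃ p, p ⊆ A ∧ MeasurableSet p ∧ volume p = r := by
  have hAfin : volume A ≠ ∞ := by
    refine ne_of_lt (lt_of_le_of_lt (measure_mono hsub) ?_)
    rw [Real.volume_Ico]; exact ENNReal.ofReal_lt_top
  have hrfin : r ≠ ∞ := ne_of_lt (lt_of_le_of_lt hr hAfin.lt_top)
  set g : ℝ → ℝ := fun x => (volume (A ∩ Set.Iic x)).toReal with hgdef
  have hfin : ∀ x, volume (A ∩ Set.Iic x) ≠ ∞ := fun x =>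
    ne_of_lt (lt_of_le_of_lt (measure_mono Set.inter_subset_left) hAfin.lt_top)
  have hsplit : ∀ x y : ℝ, x ≤ y →
      volume (A ∩ Set.Iic y) = volume (A ∩ Set.Iic x) + volume (A ∩ Set.Ioc x y) := by
    intro x y hxy
    have hset : A ∩ Set.Iic y = (A ∩ Set.Iic x) ∪ (A ∩ Set.Ioc x y) := by
      ext a
      constructor
      · rintro ⟨ha, hay⟩
        rcases le_or_gt a x with h | h
        · exact Or.inl ⟨ha, h⟩
        · exact Or.inr ⟨ha, h, hay⟩
      · rintro (⟨ha, hax⟩ | ⟨ha, _, hay⟩)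
        · exact ⟨ha, le_trans hax hxy⟩
        · exact ⟨ha, hay⟩
    rw [hset]
    refine measure_union ?_ (hA.inter measurableSet_Ioc)
    exact Set.disjoint_left.2 (fun a ⟨_, h1⟩ ⟨_, h2, _⟩ => absurd h1 (not_le.2 h2))
  have hdiff : ∀ x y : ℝ, x ≤ y → g x ≤ g y ∧ g y - g x ≤ y - x := by
    intro x y hxy
    have h1 := hsplit x y hxy
    have h2 : volume (A ∩ Set.Ioc x y) ≤ ENNReal.ofReal (y - x) := by
      calc volume (A ∩ Set.Ioc x y) ≤ volume (Set.Ioc x y) :=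
            measure_mono Set.inter_subset_right
        _ = ENNReal.ofReal (y - x) := Real.volume_Ioc
    have h2fin : volume (A ∩ Set.Ioc x y) ≠ ∞ :=
      ne_of_lt (lt_of_le_of_lt h2 ENNReal.ofReal_lt_top)
    have hgxy : g y = g x + (volume (A ∩ Set.Ioc x y)).toReal := by
      rw [hgdef]; simp only
      rw [h1, ENNReal.toReal_add (hfin x) h2fin]
    have h3 : (volume (A ∩ Set.Ioc x y)).toReal ≤ y - x := by
      have := (ENNReal.toReal_le_toReal h2fin ENNReal.ofReal_ne_top).2 h2
      rwa [ENNReal.toReal_ofReal (by linarith)] at this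
    have h4 : (0:ℝ) ≤ (volume (A ∩ Set.Ioc x y)).toReal := ENNReal.toReal_nonneg
    constructor
    · rw [hgxy]; linarith
    · rw [hgxy]; linarith
  have hlip : LipschitzWith 1 g := by
    refine LipschitzWith.of_dist_le_mul (fun x y => ?_)
    rw [Real.dist_eq, Real.dist_eq, NNReal.coe_one, one_mul]
    rcases le_total x y with h | h
    · obtain ⟨h1, h2⟩ := hdiff x y h
      rw [abs_sub_comm (g x) (g y), abs_sub_comm x y, abs_of_nonneg (by linarith),
        abs_of_nonneg (by linarith)]
      exact h2
    · obtain ⟨h1, h2⟩ := hdiff y x h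
      rw [abs_of_nonneg (by linarith), abs_of_nonneg (by linarith)]
      exact h2
  have hg0 : g 0 = 0 := by
    have hnull : volume (A ∩ Set.Iic 0) = 0 := by
      refine measure_mono_null (?_ : _ ⊆ ({0} : Set ℝ)) Real.volume_singleton
      rintro a ⟨ha, ha0⟩
      exact le_antisymm ha0 (hsub ha).1
    rw [hgdef]; simp only; rw [hnull]; simp
  have hgB : g B = (volume A).toReal := by
    have hAB : A ∩ Set.Iic B = A :=
      Set.inter_eq_self_of_subset_left (fun a ha => le_of_lt (hsub ha).2)
    rw [hgdef]; simp only; rw [hAB]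
  have hmem : r.toReal ∈ Set.Icc (g 0) (g B) := by
    constructor
    · rw [hg0]; exact ENNReal.toReal_nonneg
    · rw [hgB]; exact (ENNReal.toReal_le_toReal hrfin hAfin).2 hr
  obtain ⟨x, _, hgx⟩ := intermediate_value_Icc hB (hlip.continuous.continuousOn) hmem
  refine ⟨A ∩ Set.Iic x, Set.inter_subset_left, hA.inter measurableSet_Iic, ?_⟩
  rw [hgdef] at hgx
  simp only at hgx
  exact (ENNReal.toReal_eq_toReal_iff' (hfin x) hrfin).1 hgx

/-- If `G` has treewidth at most `t ≥ 1` and its largest clique has at most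
`ω` vertices (`2 ≤ ω ≤ t`), then `χ_f(G) ≤ t + (ω - 1)/t`. -/
theorem frac_chrom_upper_bound (t ω : ℕ) (ht : 1 ≤ t) (hω2 : 2 ≤ ω) (hωt : ω ≤ t)
    {V : Type} [Fintype V] (G : SimpleGraph V)
    (htw : TreewidthAtMost G t) (hclique : G.CliqueFree (ω + 1)) :
    fracChromNum G ≤ (t : ℝ≥0∞) + ((ω - 1 : ℕ) : ℝ≥0∞) / (t : ℝ≥0∞) := by
  classical
  obtain ⟨n, H, f, hT, hinj, hhom⟩ := htw
  by_cases hV : Nonempty V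
  swap
  · have hempty : IsEmpty V := not_nonempty_iff.mp hV
    have hcol : IsFracColoring G (fun _ => Set.Ico (0:ℝ) 1) := by
      refine ⟨fun v => measurableSet_Ico, fun v => by simp [Real.volume_Ico], fun u v h => ?_⟩
      exact (hempty.false u).elim
    refine le_trans (iInf₂_le _ hcol) ?_
    rw [Set.iUnion_of_empty]
    simp
  -- main case
  have htne0 : (t : ℝ≥0∞) ≠ 0 := by
    simp only [ne_eq, Nat.cast_eq_zero]; omega
  have htnetop : (t : ℝ≥0∞) ≠ ∞ := ENNReal.natCast_ne_top t
  set τ : ℝ≥0∞ := (t : ℝ≥0∞)⁻¹ with hτdef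
  have hτtop : τ ≠ ∞ := ENNReal.inv_ne_top.mpr htne0
  have htτ : (t : ℝ≥0∞) * τ = 1 := ENNReal.mul_inv_cancel htne0 htnetop
  set Breal : ℝ := ((t*t + (ω-1) : ℕ) : ℝ) / ((t : ℕ) : ℝ) with hBdef
  have hB0 : (0:ℝ) ≤ Breal := by positivity
  set C : Set ℝ := Set.Ico 0 Breal with hCdef
  have hCvol : volume C = ((t*t + (ω-1) : ℕ) : ℝ≥0∞) * τ := by
    rw [hCdef, Real.volume_Ico, sub_zero, hBdef,
      ENNReal.ofReal_div_of_pos (by exact_mod_cast (by omega : 0 < t)),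
      ENNReal.ofReal_natCast, ENNReal.ofReal_natCast, div_eq_mul_inv, hτdef]
  have hgoalC : volume C = (t : ℝ≥0∞) + ((ω - 1 : ℕ) : ℝ≥0∞) / (t : ℝ≥0∞) := by
    rw [hCvol, Nat.cast_add, Nat.cast_mul, add_mul, div_eq_mul_inv, ← hτdef,
      mul_assoc, htτ, mul_one]
  set G' : SimpleGraph (Fin n) := G.map (⟨f, hinj⟩ : V ↪ Fin n) with hG'def
  have hG'adj : ∀ u v : V, G.Adj u v → G'.Adj (f u) (f v) := by
    intro u v huv
    rw [hG'def]
    exact ⟨hinj.ne huv.ne, u, v, huv, rfl, rfl⟩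
  have hG'H : ∀ a b, G'.Adj a b → H.Adj a b := by
    rw [hG'def]
    rintro a b ⟨-, u, v, huv, rfl, rfl⟩
    exact hhom u v huv
  have hG'free : G'.CliqueFree (ω + 1) := by
    rw [hG'def, SimpleGraph.cliqueFree_map_iff]
    exact hclique
  have hcliqbd : ∀ s : Finset (Fin n), (∀ x ∈ s, ∀ y ∈ s, x ≠ y → G'.Adj x y) →
      s.card ≤ ω := by
    intro s hs
    by_contra hlt
    obtain ⟨s', hs'sub, hs'card⟩ := Finset.exists_subset_card_eq (by omega : ω + 1 ≤ s.card)
    refine hG'free s' ⟨?_, hs'card⟩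
    intro x hx y hy hxy
    exact hs x (hs'sub (by exact_mod_cast hx)) y (hs'sub (by exact_mod_cast hy)) hxy
  have key : ∀ m : ℕ, ∃ φ : Fin n → Set ℝ,
      (∀ j : Fin n, (j : ℕ) < m → MeasurableSet (φ j) ∧ φ j ⊆ C ∧ volume (φ j) = 1) ∧
      (∀ j k : Fin n, (j : ℕ) < m → (k : ℕ) < m → H.Adj j k →
        (G'.Adj j k → φ j ∩ φ k = ∅) ∧ (¬ G'.Adj j k → volume (φ j ∩ φ k) = τ)) := by
    intro m
    induction m with
    | zero =>
      exact ⟨fun _ => ∅, fun j hj => absurd hj (Nat.not_lt_zero _),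
        fun j k hj _ _ => absurd hj (Nat.not_lt_zero _)⟩
    | succ m ih =>
      obtain ⟨φ, hφ1, hφ2⟩ := ih
      by_cases hmn : m < n
      swap
      · refine ⟨φ, fun j _ => hφ1 j (by have := j.isLt; omega),
          fun j k _ _ hadj => hφ2 j k (by have := j.isLt; omega) (by have := k.isLt; omega) hadj⟩
      set i : Fin n := ⟨m, hmn⟩ with hidef
      set K : Finset (Fin n) := Finset.univ.filter (fun j => j < i ∧ H.Adj i j) with hKdef
      have hKmem : ∀ j, j ∈ K ↔ (j < i ∧ H.Adj i j) := by
        intro j; rw [hKdef]; simp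
      have hKlt : ∀ x, x ∈ K → (x : ℕ) < m := by
        intro x hx
        have h := ((hKmem x).1 hx).1
        rw [Fin.lt_def] at h
        exact h
      have hiK : i ∉ K := fun h => absurd ((hKmem i).1 h).1 (lt_irrefl i)
      have hKcliq : ∀ x ∈ K, ∀ y ∈ K, x ≠ y → H.Adj x y := by
        rcases le_or_gt t m with htm | htm
        · have hcl := (hT.2.2 i (by simpa using htm)).1
          intro x hx y hy hxy
          exact hcl ((hKmem x).1 hx) ((hKmem y).1 hy) hxy
        · intro x hx y hy hxy
          refine hT.2.1 x y ?_ ?_ hxy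
          · exact lt_trans (hKlt x hx) htm
          · exact lt_trans (hKlt y hy) htm
      have hKcard : K.card ≤ t := by
        rcases le_or_gt t m with htm | htm
        · have hnc := (hT.2.2 i (by simpa using htm)).2
          have hset : {j : Fin n | j < i ∧ H.Adj i j} = (K : Set (Fin n)) := by
            ext j; simp [hKmem j]
          rw [hset, Set.ncard_coe_finset] at hnc
          omega
        · have hsub : K ⊆ Finset.Iio i := fun x hx => Finset.mem_Iio.2 ((hKmem x).1 hx).1
          have hle := Finset.card_le_card hsub
          rw [Fin.card_Iio] at hle
          have : (i : ℕ) = m := rfl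
          omega
      set N : Finset (Fin n) := K.filter (fun x => G'.Adj i x) with hNdef
      set R : Finset (Fin n) := K \ N with hRdef
      have hNK : N ⊆ K := Finset.filter_subset _ _
      have hRK : R ⊆ K := Finset.sdiff_subset
      have hRmem : ∀ x, x ∈ R ↔ x ∈ K ∧ ¬ G'.Adj i x := by
        intro x
        rw [hRdef, Finset.mem_sdiff, hNdef]
        constructor
        · rintro ⟨hK, hN⟩
          exact ⟨hK, fun h => hN (Finset.mem_filter.2 ⟨hK, h⟩)⟩
        · rintro ⟨hK, h⟩
          exact ⟨hK, fun hN => h (Finset.mem_filter.1 hN).2⟩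
      have hNmem : ∀ x, x ∈ N ↔ x ∈ K ∧ G'.Adj i x := by
        intro x; rw [hNdef, Finset.mem_filter]
      have hrK : R.card ≤ K.card := Finset.card_le_card hRK
      have hrt : R.card ≤ t := le_trans hrK hKcard
      have hq : ∀ q : ℕ, ((q : ℝ≥0∞)) * τ ≠ ∞ :=
        fun q => ENNReal.mul_ne_top (ENNReal.natCast_ne_top q) hτtop
      have unionlem : ∀ s : Finset (Fin n), s ⊆ K → ∃ B : Finset (Fin n), B ⊆ s ∧
          (∀ x ∈ B, ∀ y ∈ B, x ≠ y → G'.Adj x y) ∧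
          volume (⋃ x ∈ s, φ x) + ((s.card - B.card : ℕ) : ℝ≥0∞) * τ ≤ (s.card : ℝ≥0∞) := by
        intro s
        induction s using Finset.induction_on with
        | empty =>
          intro _
          exact ⟨∅, Finset.Subset.refl _, fun x hx => absurd hx (Finset.notMem_empty x),
            by simp⟩
        | insert a s ha ihs =>
          intro hsubK
          have haK : a ∈ K := hsubK (Finset.mem_insert_self a s)
          have hsK : s ⊆ K := fun x hx => hsubK (Finset.mem_insert_of_mem hx)
          obtain ⟨B, hBs, hBcl, hBineq⟩ := ihs hsK
          have hBcard : B.card ≤ s.card := Finset.card_le_card hBs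
          have hscard : (insert a s).card = s.card + 1 := Finset.card_insert_of_notMem ha
          by_cases hall : ∀ l ∈ s, G'.Adj a l
          · refine ⟨insert a B, Finset.insert_subset_insert a hBs, ?_, ?_⟩
            · intro x hx y hy hxy
              rcases Finset.mem_insert.1 hx with hxa | hx
              · rcases Finset.mem_insert.1 hy with hya | hy
                · exact absurd (hxa.trans hya.symm) hxy
                · rw [hxa]; exact hall y (hBs hy)
              · rcases Finset.mem_insert.1 hy with hya | hy
                · rw [hya]; exact (hall x (hBs hx)).symm
                · exact hBcl x hx y hy hxy
            · have haB : a ∉ B := fun h => ha (hBs h)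
              rw [hscard, Finset.card_insert_of_notMem haB, Finset.set_biUnion_insert,
                (by omega : s.card + 1 - (B.card + 1) = s.card - B.card)]
              have h1 : volume (φ a ∪ ⋃ x ∈ s, φ x) ≤ 1 + volume (⋃ x ∈ s, φ x) := by
                refine le_trans (measure_union_le _ _) ?_
                rw [(hφ1 a (hKlt a haK)).2.2]
              calc volume (φ a ∪ ⋃ x ∈ s, φ x) + ((s.card - B.card : ℕ) : ℝ≥0∞) * τ
                  ≤ 1 + (volume (⋃ x ∈ s, φ x) + ((s.card - B.card : ℕ) : ℝ≥0∞) * τ) := by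
                    rw [← add_assoc]; exact add_le_add_left h1 _
                _ ≤ 1 + (s.card : ℝ≥0∞) := add_le_add_right hBineq _
                _ = ((s.card + 1 : ℕ) : ℝ≥0∞) := by push_cast; ring
          · push_neg at hall
            obtain ⟨l, hls, hnadj⟩ := hall
            have hlK : l ∈ K := hsK hls
            have hal : a ≠ l := fun h => ha (h ▸ hls)
            have hadj : H.Adj a l := hKcliq a haK l hlK hal
            have hinv := (hφ2 a l (hKlt a haK) (hKlt l hlK) hadj).2 hnadj
            have hsub2 : (⋃ x ∈ insert a s, φ x) ⊆ (⋃ x ∈ s, φ x) ∪ (φ a \ φ l) := by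
              rw [Finset.set_biUnion_insert]
              rintro x (hx | hx)
              · by_cases hxl : x ∈ φ l
                · exact Or.inl (Set.mem_biUnion hls hxl)
                · exact Or.inr ⟨hx, hxl⟩
              · exact Or.inl hx
            have hdiff : volume (φ a ∩ φ l) + volume (φ a \ φ l) = 1 := by
              rw [measure_inter_add_diff (φ a) (hφ1 l (hKlt l hlK)).1]
              exact (hφ1 a (hKlt a haK)).2.2
            refine ⟨B, hBs.trans (Finset.subset_insert a s), hBcl, ?_⟩
            rw [hscard, (by omega : s.card + 1 - B.card = (s.card - B.card) + 1)]
            have hle : volume (⋃ x ∈ insert a s, φ x)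
                ≤ volume (⋃ x ∈ s, φ x) + volume (φ a \ φ l) :=
              le_trans (measure_mono hsub2) (measure_union_le _ _)
            calc volume (⋃ x ∈ insert a s, φ x) + (((s.card - B.card) + 1 : ℕ) : ℝ≥0∞) * τ
                ≤ (volume (⋃ x ∈ s, φ x) + volume (φ a \ φ l))
                    + (((s.card - B.card : ℕ) : ℝ≥0∞) + 1) * τ := by
                  refine add_le_add hle (le_of_eq ?_)
                  push_cast; ring
              _ = (volume (⋃ x ∈ s, φ x) + ((s.card - B.card : ℕ) : ℝ≥0∞) * τ)
                    + (volume (φ a \ φ l) + τ) := by ring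
              _ = (volume (⋃ x ∈ s, φ x) + ((s.card - B.card : ℕ) : ℝ≥0∞) * τ) + 1 := by
                  rw [← hinv, add_comm (volume (φ a \ φ l)) _, hdiff]
              _ ≤ (s.card : ℝ≥0∞) + 1 := add_le_add_left hBineq _
              _ = ((s.card + 1 : ℕ) : ℝ≥0∞) := by push_cast; ring
      obtain ⟨B, hBK, hBcl, hBineq⟩ := unionlem K (Finset.Subset.refl K)
      have hBcard : B.card ≤ K.card := Finset.card_le_card hBK
      have hbR : B.card ≤ (ω - 1) + R.card := by
        by_cases hR0 : R = ∅
        · have hKN : K ⊆ N := by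
            rw [hRdef] at hR0
            exact Finset.sdiff_eq_empty_iff_subset.1 hR0
          have hiB : i ∉ B := fun h => hiK (hBK h)
          have hins : ∀ x ∈ insert i B, ∀ y ∈ insert i B, x ≠ y → G'.Adj x y := by
            intro x hx y hy hxy
            rcases Finset.mem_insert.1 hx with rfl | hx
            · rcases Finset.mem_insert.1 hy with rfl | hy
              · exact absurd rfl hxy
              · exact ((hNmem y).1 (hKN (hBK hy))).2
            · rcases Finset.mem_insert.1 hy with rfl | hy
              · exact (((hNmem x).1 (hKN (hBK hx))).2).symm
              · exact hBcl x hx y hy hxy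
          have hcb := hcliqbd _ hins
          rw [Finset.card_insert_of_notMem hiB] at hcb
          omega
        · have h1 : 1 ≤ R.card := Finset.card_pos.2 (Finset.nonempty_iff_ne_empty.2 hR0)
          have h2 := hcliqbd B hBcl
          omega
      have hnat : K.card * t + (t - R.card) ≤ (t * t + (ω - 1)) + (K.card - B.card) := by
        rcases eq_or_lt_of_le hKcard with heq | hlt
        · rw [heq, add_assoc]
          exact Nat.add_le_add_left (by omega) (t * t)
        · calc K.card * t + (t - R.card) ≤ K.card * t + t := by omega
            _ = (K.card + 1) * t := by ring
            _ ≤ t * t := Nat.mul_le_mul (by omega) (le_refl t)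
            _ ≤ (t * t + (ω - 1)) + (K.card - B.card) := by omega
      have hUne : volume (⋃ x ∈ K, φ x) ≠ ∞ := by
        refine ne_of_lt (lt_of_le_of_lt (le_trans (le_add_right le_rfl) hBineq) ?_)
        exact ENNReal.natCast_lt_top K.card
      have hKcast : (K.card : ℝ≥0∞) = ((K.card * t : ℕ) : ℝ≥0∞) * τ := by
        push_cast
        rw [mul_assoc, htτ, mul_one]
      have hchain : volume (⋃ x ∈ K, φ x) + ((t - R.card : ℕ) : ℝ≥0∞) * τ ≤ volume C := by
        have h2 : (volume (⋃ x ∈ K, φ x) + ((t - R.card : ℕ) : ℝ≥0∞) * τ)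
              + ((K.card - B.card : ℕ) : ℝ≥0∞) * τ
            ≤ volume C + ((K.card - B.card : ℕ) : ℝ≥0∞) * τ := by
          calc (volume (⋃ x ∈ K, φ x) + ((t - R.card : ℕ) : ℝ≥0∞) * τ)
                + ((K.card - B.card : ℕ) : ℝ≥0∞) * τ
              = (volume (⋃ x ∈ K, φ x) + ((K.card - B.card : ℕ) : ℝ≥0∞) * τ)
                + ((t - R.card : ℕ) : ℝ≥0∞) * τ := by ring
            _ ≤ (K.card : ℝ≥0∞) + ((t - R.card : ℕ) : ℝ≥0∞) * τ := add_le_add_left hBineq _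
            _ = (((K.card * t : ℕ) : ℝ≥0∞) + ((t - R.card : ℕ) : ℝ≥0∞)) * τ := by
                rw [hKcast, add_mul]
            _ = ((K.card * t + (t - R.card) : ℕ) : ℝ≥0∞) * τ := by push_cast; ring
            _ ≤ (((t * t + (ω - 1)) + (K.card - B.card) : ℕ) : ℝ≥0∞) * τ :=
                mul_le_mul_left (by exact_mod_cast hnat) τ
            _ = volume C + ((K.card - B.card : ℕ) : ℝ≥0∞) * τ := by
                rw [hCvol]; push_cast; ring
        exact (ENNReal.add_le_add_iff_right (hq _)).1 h2
      have hmeasK : MeasurableSet (⋃ x ∈ K, φ x) :=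
        Finset.measurableSet_biUnion K (fun x hx => (hφ1 x (hKlt x hx)).1)
      have havail : ((t - R.card : ℕ) : ℝ≥0∞) * τ ≤ volume (C \ ⋃ x ∈ K, φ x) := by
        have hCsub : C ⊆ (⋃ x ∈ K, φ x) ∪ (C \ ⋃ x ∈ K, φ x) := by
          intro x hx
          by_cases h : x ∈ ⋃ x ∈ K, φ x
          · exact Or.inl h
          · exact Or.inr ⟨hx, h⟩
        have h3 : volume C ≤ volume (⋃ x ∈ K, φ x) + volume (C \ ⋃ x ∈ K, φ x) :=
          le_trans (measure_mono hCsub) (measure_union_le _ _)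
        exact (ENNReal.add_le_add_iff_left hUne).1 (le_trans hchain h3)
      have hCmeas : MeasurableSet (C \ ⋃ x ∈ K, φ x) := by
        rw [hCdef]
        exact measurableSet_Ico.diff hmeasK
      obtain ⟨pad, hpadsub, hpadmeas, hpadvol⟩ :=
        exists_subset_volume_eq hCmeas hB0 (fun x hx => hx.1) havail
      have hexpc : ∀ u : Fin n, ∃ p : Set ℝ,
          (u ∈ R → p ⊆ (φ u \ ⋃ x ∈ K.erase u, φ x) ∧ MeasurableSet p ∧ volume p = τ) ∧
          (u ∉ R → p = ∅) := by
        intro u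
        by_cases hu : u ∈ R
        · have huK : u ∈ K := hRK hu
          have hult : (u : ℕ) < m := hKlt u huK
          have hmeasE : MeasurableSet (⋃ x ∈ K.erase u, φ x) :=
            Finset.measurableSet_biUnion _
              (fun x hx => (hφ1 x (hKlt x (Finset.mem_of_mem_erase hx))).1)
          have hAmeas : MeasurableSet (φ u \ ⋃ x ∈ K.erase u, φ x) :=
            (hφ1 u hult).1.diff hmeasE
          have hAsub : (φ u \ ⋃ x ∈ K.erase u, φ x) ⊆ Set.Ico 0 Breal :=
            fun x hx => (hφ1 u hult).2.1 hx.1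
          have hcover : φ u ⊆ (φ u \ ⋃ x ∈ K.erase u, φ x) ∪ (⋃ x ∈ K.erase u, φ u ∩ φ x) := by
            intro y hy
            by_cases h : y ∈ ⋃ x ∈ K.erase u, φ x
            · simp only [Set.mem_iUnion] at h
              obtain ⟨x, hx, hyx⟩ := h
              exact Or.inr (Set.mem_biUnion hx ⟨hy, hyx⟩)
            · exact Or.inl ⟨hy, h⟩
          have hover : ∀ x ∈ K.erase u, volume (φ u ∩ φ x) ≤ τ := by
            intro x hx
            have hxK := Finset.mem_of_mem_erase hx
            have hxu : x ≠ u := Finset.ne_of_mem_erase hx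
            have hadj : H.Adj u x := hKcliq u huK x hxK (fun h => hxu h.symm)
            have hiv := hφ2 u x hult (hKlt x hxK) hadj
            by_cases hGadj : G'.Adj u x
            · rw [hiv.1 hGadj]; simp
            · rw [hiv.2 hGadj]
          have hsum : volume (⋃ x ∈ K.erase u, φ u ∩ φ x)
              ≤ ((K.card - 1 : ℕ) : ℝ≥0∞) * τ := by
            refine le_trans (measure_biUnion_finset_le _ _) ?_
            calc ∑ x ∈ K.erase u, volume (φ u ∩ φ x) ≤ (K.erase u).card • τ :=
                Finset.sum_le_card_nsmul _ _ _ hover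
              _ = ((K.card - 1 : ℕ) : ℝ≥0∞) * τ := by
                rw [Finset.card_erase_of_mem huK, nsmul_eq_mul]
          have h1 : (1 : ℝ≥0∞) ≤ volume (φ u \ ⋃ x ∈ K.erase u, φ x)
              + ((K.card - 1 : ℕ) : ℝ≥0∞) * τ := by
            rw [← (hφ1 u hult).2.2]
            refine le_trans (measure_mono hcover) (le_trans (measure_union_le _ _) ?_)
            exact add_le_add_right hsum _
          have hKpos : 1 ≤ K.card := Finset.card_pos.2 ⟨u, huK⟩
          have hτA : τ ≤ volume (φ u \ ⋃ x ∈ K.erase u, φ x) := by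
            by_contra hlt
            push_neg at hlt
            have h2 : volume (φ u \ ⋃ x ∈ K.erase u, φ x) + ((K.card - 1 : ℕ) : ℝ≥0∞) * τ
                < τ + ((K.card - 1 : ℕ) : ℝ≥0∞) * τ := ENNReal.add_lt_add_right (hq _) hlt
            have h3 : τ + ((K.card - 1 : ℕ) : ℝ≥0∞) * τ ≤ 1 := by
              calc τ + ((K.card - 1 : ℕ) : ℝ≥0∞) * τ
                  = ((1 + (K.card - 1) : ℕ) : ℝ≥0∞) * τ := by push_cast; ring
                _ = (K.card : ℝ≥0∞) * τ := by
                    rw [(by omega : 1 + (K.card - 1) = K.card)]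
                _ ≤ (t : ℝ≥0∞) * τ := mul_le_mul_left (by exact_mod_cast hKcard) τ
                _ = 1 := htτ
            exact absurd ((lt_of_le_of_lt h1 h2).trans_le h3) (lt_irrefl 1)
          obtain ⟨p, hp1, hp2, hp3⟩ := exists_subset_volume_eq hAmeas hB0 hAsub hτA
          exact ⟨p, fun _ => ⟨hp1, hp2, hp3⟩, fun h => absurd hu h⟩
        · exact ⟨∅, fun h => absurd h hu, fun _ => rfl⟩
      choose pc hpc using hexpc
      set φi : Set ℝ := pad ∪ ⋃ u ∈ R, pc u with hφidef
      have hpcsub : ∀ u ∈ R, pc u ⊆ φ u \ ⋃ x ∈ K.erase u, φ x := fun u hu => ((hpc u).1 hu).1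
      have hpcφ : ∀ u ∈ R, pc u ⊆ φ u := fun u hu y hy => (hpcsub u hu hy).1
      have hpcavoid : ∀ u ∈ R, ∀ x ∈ K, x ≠ u → ∀ y, y ∈ pc u → y ∉ φ x := by
        intro u hu x hx hxu y hy hyx
        refine (hpcsub u hu hy).2 ?_
        simp only [Set.mem_iUnion]
        exact ⟨x, Finset.mem_erase.2 ⟨hxu, hx⟩, hyx⟩
      have hpadavoid : ∀ x ∈ K, ∀ y, y ∈ pad → y ∉ φ x := by
        intro x hx y hy hyx
        exact (hpadsub hy).2 (Set.mem_biUnion hx hyx)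
      have hpcmeas : ∀ u ∈ R, MeasurableSet (pc u) := fun u hu => ((hpc u).1 hu).2.1
      have hpcvol : ∀ u ∈ R, volume (pc u) = τ := fun u hu => ((hpc u).1 hu).2.2
      have hφimeas : MeasurableSet φi :=
        hpadmeas.union (Finset.measurableSet_biUnion _ hpcmeas)
      have hφiC : φi ⊆ C := by
        rintro y (hy | hy)
        · exact (hpadsub hy).1
        · simp only [Set.mem_iUnion] at hy
          obtain ⟨u, hu, hyu⟩ := hy
          exact (hφ1 u (hKlt u (hRK hu))).2.1 (hpcφ u hu hyu)
      have hφivol : volume φi = 1 := by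
        have hdisj : Disjoint pad (⋃ u ∈ R, pc u) := by
          rw [Set.disjoint_left]
          intro y hy hy2
          simp only [Set.mem_iUnion] at hy2
          obtain ⟨u, hu, hyu⟩ := hy2
          exact hpadavoid u (hRK hu) y hy (hpcφ u hu hyu)
        have hpw : (R : Set (Fin n)).PairwiseDisjoint pc := by
          intro u hu v hv huv
          rw [Function.onFun, Set.disjoint_left]
          intro y hyu hyv
          have huR : u ∈ R := by exact_mod_cast hu
          have hvR : v ∈ R := by exact_mod_cast hv
          exact hpcavoid u huR v (hRK hvR) (fun h => huv h.symm) y hyu (hpcφ v hvR hyv)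
        rw [hφidef, measure_union hdisj (Finset.measurableSet_biUnion _ hpcmeas),
          measure_biUnion_finset hpw hpcmeas, hpadvol,
          Finset.sum_congr rfl (fun u hu => hpcvol u hu), Finset.sum_const, nsmul_eq_mul,
          ← add_mul, ← Nat.cast_add, (by omega : (t - R.card) + R.card = t), htτ]
      have main_i : ∀ k : Fin n, (k : ℕ) < m → H.Adj i k →
          (G'.Adj i k → φi ∩ φ k = ∅) ∧ (¬ G'.Adj i k → volume (φi ∩ φ k) = τ) := by
        intro k hkm hadj
        have hkK : k ∈ K := (hKmem k).2 ⟨Fin.lt_def.2 hkm, hadj⟩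
        constructor
        · intro hGadj
          rw [Set.eq_empty_iff_forall_notMem]
          rintro y ⟨hy1, hy2⟩
          rcases hy1 with hy | hy
          · exact hpadavoid k hkK y hy hy2
          · simp only [Set.mem_iUnion] at hy
            obtain ⟨u, hu, hyu⟩ := hy
            have huk : k ≠ u := by
              intro h
              exact ((hRmem k).1 (h ▸ hu)).2 hGadj
            exact hpcavoid u hu k hkK huk y hyu hy2
        · intro hGadj
          have hkR : k ∈ R := (hRmem k).2 ⟨hkK, hGadj⟩
          have hset : φi ∩ φ k = pc k := by
            ext y
            constructor
            · rintro ⟨hy1, hy2⟩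
              rcases hy1 with hy | hy
              · exact absurd hy2 (hpadavoid k hkK y hy)
              · simp only [Set.mem_iUnion] at hy
                obtain ⟨u, hu, hyu⟩ := hy
                by_cases huk : u = k
                · exact huk ▸ hyu
                · exact absurd hy2 (hpcavoid u hu k hkK (fun h => huk h.symm) y hyu)
            · intro hy
              exact ⟨Or.inr (Set.mem_biUnion hkR hy), hpcφ k hkR hy⟩
          rw [hset]
          exact hpcvol k hkR
      refine ⟨Function.update φ i φi, ?_, ?_⟩
      · intro j hj
        by_cases hji : j = i
        · subst hji
          rw [Function.update_self]
          exact ⟨hφimeas, hφiC, hφivol⟩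
        · have hjm : (j : ℕ) < m := by
            have hne : (j : ℕ) ≠ m := fun h => hji (Fin.ext (by simpa using h))
            omega
          rw [Function.update_of_ne hji]
          exact hφ1 j hjm
      · intro j k hj hk hadj
        have hjk : j ≠ k := hadj.ne
        by_cases hji : j = i
        · subst hji
          have hki : k ≠ i := Ne.symm hjk
          have hkm : (k : ℕ) < m := by
            have hne : (k : ℕ) ≠ m := fun h => hki (Fin.ext (by simpa using h))
            omega
          rw [Function.update_self, Function.update_of_ne hki]
          exact main_i k hkm hadj
        · by_cases hki : k = i
          · subst hki
            have hjm : (j : ℕ) < m := by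
              have hne : (j : ℕ) ≠ m := fun h => hji (Fin.ext (by simpa using h))
              omega
            rw [Function.update_of_ne hji, Function.update_self, Set.inter_comm]
            have hm := main_i j hjm hadj.symm
            exact ⟨fun h => hm.1 h.symm, fun h => hm.2 (fun h2 => h h2.symm)⟩
          · have hjm : (j : ℕ) < m := by
              have hne : (j : ℕ) ≠ m := fun h => hji (Fin.ext (by simpa using h))
              omega
            have hkm : (k : ℕ) < m := by
              have hne : (k : ℕ) ≠ m := fun h => hki (Fin.ext (by simpa using h))
              omega
            rw [Function.update_of_ne hji, Function.update_of_ne hki]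
            exact hφ2 j k hjm hkm hadj
  obtain ⟨φ, h1, h2⟩ := key n
  have hcol : IsFracColoring G (fun v => φ (f v)) := by
    refine ⟨fun v => (h1 (f v) (f v).isLt).1, fun v => (h1 (f v) (f v).isLt).2.2, ?_⟩
    intro u v huv
    exact (h2 (f u) (f v) (f u).isLt (f v).isLt (hhom u v huv)).1 (hG'adj u v huv)
  refine le_trans (iInf₂_le _ hcol) ?_
  rw [← hgoalC]
  exact measure_mono (Set.iUnion_subset (fun v => (h1 (f v) (f v).isLt).2.1))
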